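/- arXiv:2503.06066 — 2 statements merged into one kernel-verified Lean document; each statement's English description precedes it below -/
import Mathlib

section
/- Let Θ = D_v^{-1/2} H W D_e^{-1} Hᵀ D_v^{-1/2} be the hypergraph Laplacian variant and Δ = I − Θ. Then Δ is symmetric positive semidefinite; equivalently, every eigenvalue of Θ is at most 1. -/
open Matrix

theorem hypergraph_laplacian_psd (n m : ℕ)
    (H : Matrix (Fin n) (Fin m) ℝ) (hH : ∀ v e, 0 ≤ H v e)
    (w : Fin m → ℝ) (hw : ∀ e, 0 < w e)
    (δ : Fin m → ℝ) (hδ : ∀ e, δ e = ∑ v, H v e) (hδpos : ∀ e, 0 < δ e)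
    (d : Fin n → ℝ) (hd : ∀ v, d v = ∑ e, w e * H v e) (hdpos : ∀ v, 0 < d v) :
    (1 - Matrix.diagonal (fun v => (Real.sqrt (d v))⁻¹) * H * Matrix.diagonal w *
      Matrix.diagonal (fun e => (δ e)⁻¹) * Hᵀ *
      Matrix.diagonal (fun v => (Real.sqrt (d v))⁻¹)).PosSemidef := by
  set a : Fin n → ℝ := fun v => (Real.sqrt (d v))⁻¹ with ha
  have hΘ : (Matrix.diagonal (fun v => (Real.sqrt (d v))⁻¹) * H *
        Matrix.diagonal w * Matrix.diagonal (fun e => (δ e)⁻¹) * Hᵀ *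
        Matrix.diagonal (fun v => (Real.sqrt (d v))⁻¹))
      = Matrix.of (fun u v => ∑ e, a u * H u e * w e * (δ e)⁻¹ * H v e * a v) := by
    ext u v
    rw [Matrix.mul_diagonal, Matrix.mul_apply, Finset.sum_mul]
    simp only [Matrix.mul_diagonal, Matrix.diagonal_mul, Matrix.transpose_apply,
      Matrix.of_apply, ha]
  rw [hΘ]
  rw [Matrix.posSemidef_iff_dotProduct_mulVec]
  constructor
  · -- Hermitian
    refine Matrix.IsHermitian.sub Matrix.isHermitian_one ?_
    ext i j
    simp only [Matrix.conjTranspose_apply, Matrix.of_apply, star_trivial]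
    exact Finset.sum_congr rfl fun e _ => by ring
  · intro x
    have swap3 : ∀ (F : Fin n → Fin n → Fin m → ℝ),
        ∑ u, ∑ v, ∑ e, F u v e = ∑ e, ∑ u, ∑ v, F u v e := by
      intro F
      calc ∑ u, ∑ v, ∑ e, F u v e = ∑ u, ∑ e, ∑ v, F u v e :=
            Finset.sum_congr rfl fun i _ => Finset.sum_comm
        _ = ∑ e, ∑ u, ∑ v, F u v e := Finset.sum_comm
    have hquad : (star x) ⬝ᵥ ((1 - Matrix.of (fun u v =>
          ∑ e, a u * H u e * w e * (δ e)⁻¹ * H v e * a v)) *ᵥ x)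
        = (∑ v, x v ^ 2) - ∑ e, w e * (δ e)⁻¹ * (∑ v, H v e * (x v * a v)) ^ 2 := by
      simp only [sub_mulVec, dotProduct_sub, one_mulVec, star_trivial]
      congr 1
      · simp only [dotProduct]
        exact Finset.sum_congr rfl fun v _ => by ring
      · simp only [dotProduct, mulVec, dotProduct, Matrix.of_apply, pow_two]
        simp only [Finset.mul_sum, Finset.sum_mul]
        rw [swap3]
        refine Finset.sum_congr rfl fun e _ => ?_
        rw [Finset.sum_comm]
        exact Finset.sum_congr rfl fun u _ =>
          Finset.sum_congr rfl fun v _ => by ring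
    rw [hquad]
    rw [sub_nonneg]
    -- Cauchy-Schwarz bound
    have CS : ∀ e, (∑ v, H v e * (x v * a v)) ^ 2
        ≤ δ e * ∑ v, H v e * (x v * a v) ^ 2 := by
      intro e
      have h := Finset.sum_mul_sq_le_sq_mul_sq Finset.univ
        (fun v => Real.sqrt (H v e)) (fun v => Real.sqrt (H v e) * (x v * a v))
      have e1 : ∀ v : Fin n, Real.sqrt (H v e) * (Real.sqrt (H v e) * (x v * a v))
          = H v e * (x v * a v) := fun v => by
        rw [← mul_assoc, Real.mul_self_sqrt (hH v e)]
      have e2 : ∀ v : Fin n, Real.sqrt (H v e) ^ 2 = H v e := fun v => Real.sq_sqrt (hH v e)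
      have e3 : ∀ v : Fin n, (Real.sqrt (H v e) * (x v * a v)) ^ 2
          = H v e * (x v * a v) ^ 2 := fun v => by rw [mul_pow, e2]
      simp only [e1, e2, e3] at h
      rwa [← hδ] at h
    calc ∑ e, w e * (δ e)⁻¹ * (∑ v, H v e * (x v * a v)) ^ 2
        ≤ ∑ e, w e * (δ e)⁻¹ * (δ e * ∑ v, H v e * (x v * a v) ^ 2) := by
          refine Finset.sum_le_sum fun e _ => ?_
          exact mul_le_mul_of_nonneg_left (CS e)
            (mul_nonneg (hw e).le (inv_nonneg.mpr (hδpos e).le))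
      _ = ∑ e, ∑ v, w e * (H v e * (x v * a v) ^ 2) := by
          refine Finset.sum_congr rfl fun e _ => ?_
          rw [Finset.mul_sum, Finset.mul_sum]
          refine Finset.sum_congr rfl fun v _ => ?_
          have hne : (δ e)⁻¹ * δ e = 1 := inv_mul_cancel₀ (hδpos e).ne'
          calc w e * (δ e)⁻¹ * (δ e * (H v e * (x v * a v) ^ 2))
              = w e * (H v e * (x v * a v) ^ 2) * ((δ e)⁻¹ * δ e) := by ring
            _ = w e * (H v e * (x v * a v) ^ 2) := by rw [hne, mul_one]
      _ = ∑ v, (x v * a v) ^ 2 * ∑ e, w e * H v e := by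
          rw [Finset.sum_comm]
          refine Finset.sum_congr rfl fun v _ => ?_
          rw [Finset.mul_sum]
          exact Finset.sum_congr rfl fun e _ => by ring
      _ = ∑ v, x v ^ 2 := by
          refine Finset.sum_congr rfl fun v _ => ?_
          rw [← hd v]
          have hav : a v ^ 2 = (d v)⁻¹ := by
            rw [ha]
            rw [inv_pow, Real.sq_sqrt (hdpos v).le]
          calc (x v * a v) ^ 2 * d v = x v ^ 2 * (a v ^ 2 * d v) := by ring
            _ = x v ^ 2 := by rw [hav, inv_mul_cancel₀ (hdpos v).ne', mul_one]
end

section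
/- For any f ∈ ℝⁿ, the quadratic form identity holds: (1/2) Σ_{e∈E} Σ_{u,v∈V} (w(e) H(u,e) H(v,e) / δ(e)) · (f(u)/√d(u) − f(v)/√d(v))² = fᵀ (I − Θ) f, where Θ = D_v^{-1/2} H W D_e^{-1} Hᵀ D_v^{-1/2}. -/
open Matrix Finset

theorem hypergraph_quadratic_form_identity (n m : ℕ)
    (H : Matrix (Fin n) (Fin m) ℝ) (hH : ∀ v e, 0 ≤ H v e)
    (w : Fin m → ℝ) (hw : ∀ e, 0 < w e)
    (δ : Fin m → ℝ) (hδ : ∀ e, δ e = ∑ v, H v e) (hδpos : ∀ e, 0 < δ e)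
    (d : Fin n → ℝ) (hd : ∀ v, d v = ∑ e, w e * H v e) (hdpos : ∀ v, 0 < d v)
    (f : Fin n → ℝ) :
    (1 / 2) * ∑ e, ∑ u, ∑ v,
        (w e * H u e * H v e / δ e) *
          (f u / Real.sqrt (d u) - f v / Real.sqrt (d v)) ^ 2
      = f ⬝ᵥ ((1 - Matrix.diagonal (fun v => (Real.sqrt (d v))⁻¹) * H *
          Matrix.diagonal w * Matrix.diagonal (fun e => (δ e)⁻¹) * Hᵀ *
          Matrix.diagonal (fun v => (Real.sqrt (d v))⁻¹)) *ᵥ f) := by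
  -- Abbreviation
  set g : Fin n → ℝ := fun v => f v / Real.sqrt (d v) with hg
  -- Generic computation of the "one-sided" sums
  have key : ∀ p : Fin n → ℝ,
      (∑ e, ∑ u, ∑ v, (w e * H u e * H v e / δ e) * p u) = ∑ u, d u * p u := by
    intro p
    calc ∑ e, ∑ u, ∑ v, (w e * H u e * H v e / δ e) * p u
        = ∑ e, ∑ u, (w e * H u e * p u / δ e) * ∑ v, H v e := by
          refine Finset.sum_congr rfl fun e _ => Finset.sum_congr rfl fun u _ => ?_
          rw [Finset.mul_sum]
          exact Finset.sum_congr rfl fun v _ => by ring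
      _ = ∑ e, ∑ u, w e * H u e * p u := by
          refine Finset.sum_congr rfl fun e _ => Finset.sum_congr rfl fun u _ => ?_
          rw [← hδ e, div_mul_cancel₀ _ (hδpos e).ne']
      _ = ∑ u, ∑ e, w e * H u e * p u := Finset.sum_comm
      _ = ∑ u, d u * p u := by
          refine Finset.sum_congr rfl fun u _ => ?_
          rw [hd u, Finset.sum_mul]
  have hg2 : ∀ u, d u * g u ^ 2 = f u ^ 2 := by
    intro u
    rw [hg]
    simp only [div_pow, Real.sq_sqrt (hdpos u).le]
    rw [mul_div_assoc', mul_comm, mul_div_assoc, div_self (hdpos u).ne', mul_one]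
  have h1 : (∑ e, ∑ u, ∑ v, (w e * H u e * H v e / δ e) * g u ^ 2) = ∑ u, f u ^ 2 := by
    rw [key fun u => g u ^ 2]
    exact Finset.sum_congr rfl fun u _ => hg2 u
  have h3 : (∑ e, ∑ u, ∑ v, (w e * H u e * H v e / δ e) * g v ^ 2) = ∑ u, f u ^ 2 := by
    rw [← h1]
    refine Finset.sum_congr rfl fun e _ => ?_
    exact Finset.sum_comm.trans
      (Finset.sum_congr rfl fun u _ => Finset.sum_congr rfl fun v _ => by ring)
  -- Expand the square
  have expand : (∑ e, ∑ u, ∑ v, (w e * H u e * H v e / δ e) * (g u - g v) ^ 2)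
      = (∑ e, ∑ u, ∑ v, (w e * H u e * H v e / δ e) * g u ^ 2)
        + (∑ e, ∑ u, ∑ v, (w e * H u e * H v e / δ e) * g v ^ 2)
        - 2 * ∑ e, ∑ u, ∑ v, (w e * H u e * H v e / δ e) * (g u * g v) := by
    rw [Finset.mul_sum, ← Finset.sum_add_distrib, ← Finset.sum_sub_distrib]
    refine Finset.sum_congr rfl fun e _ => ?_
    rw [Finset.mul_sum, ← Finset.sum_add_distrib, ← Finset.sum_sub_distrib]
    refine Finset.sum_congr rfl fun u _ => ?_
    rw [Finset.mul_sum, ← Finset.sum_add_distrib, ← Finset.sum_sub_distrib]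
    exact Finset.sum_congr rfl fun v _ => by ring
  -- Compute the right-hand side
  have rhs : f ⬝ᵥ ((1 - Matrix.diagonal (fun v => (Real.sqrt (d v))⁻¹) * H *
          Matrix.diagonal w * Matrix.diagonal (fun e => (δ e)⁻¹) * Hᵀ *
          Matrix.diagonal (fun v => (Real.sqrt (d v))⁻¹)) *ᵥ f)
      = (∑ u, f u ^ 2) - ∑ e, ∑ u, ∑ v,
          (w e * H u e * H v e / δ e) * (g u * g v) := by
    simp only [Matrix.sub_mulVec, Matrix.one_mulVec, dotProduct_sub, dotProduct,
      Matrix.mulVec, Matrix.mul_apply, Matrix.sub_apply, Matrix.one_apply,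
      Matrix.diagonal_apply, Matrix.transpose_apply,
      ite_mul, mul_ite, mul_zero, zero_mul, one_mul, Finset.sum_ite_eq, Finset.sum_ite_eq',
      Finset.mem_univ, if_true, sub_mul, mul_sub, Finset.sum_sub_distrib, Finset.sum_mul,
      Finset.mul_sum]
    congr 1
    · exact Finset.sum_congr rfl fun u _ => (sq (f u)).symm
    · rw [show (∑ x : Fin n, ∑ x_1 : Fin n, ∑ i : Fin m,
          f x * ((Real.sqrt (d x))⁻¹ * H x i * w i * (δ i)⁻¹ * H x_1 i * (Real.sqrt (d x_1))⁻¹ * f x_1))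
          = ∑ i : Fin m, ∑ x : Fin n, ∑ x_1 : Fin n,
          f x * ((Real.sqrt (d x))⁻¹ * H x i * w i * (δ i)⁻¹ * H x_1 i * (Real.sqrt (d x_1))⁻¹ * f x_1) from
          (Finset.sum_congr rfl fun x _ => Finset.sum_comm).trans Finset.sum_comm]
      refine Finset.sum_congr rfl fun e _ => Finset.sum_congr rfl fun u _ =>
        Finset.sum_congr rfl fun v _ => ?_
      rw [hg]
      ring
  rw [rhs, expand, h1, h3]
  ring
end
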